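/- Let k ≥ 2, let n be even with n ≥ 3k+1, and let x satisfy 2k ≤ x ≤ n-k-1 with the appropriate parity so that (n-2k)(x-2k) is even. Then the sequence (n-k-1, …, n-k-1, x-k, …, x-k) of length n-k, with k copies of n-k-1 and n-2k copies of x-k, is graphic. -/

import Mathlib

open Finset SimpleGraph


lemma exists_regular_graph (m d : ℕ) [NeZero m] (hd : d < m) (he : Even (m * d)) :
    ∃ (H : SimpleGraph (ZMod m)) (_ : DecidableRel H.Adj),
      ∀ v, (H.neighborFinset v).card = d := by
  set r := d / 2 with hr
  have hm0 : 0 < m := by omega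
  have hdm : d % 2 = 0 ∨ (d % 2 = 1 ∧ m % 2 = 0) := by
    rcases Nat.even_or_odd d with h | h
    · left; exact Nat.even_iff.mp h
    · right
      have hm : Even m := (Nat.even_mul.mp he).resolve_right ((Nat.not_even_iff_odd.mpr h))
      exact ⟨Nat.odd_iff.mp h, Nat.even_iff.mp hm⟩
  set U : Finset ℕ := Finset.Icc 1 r ∪ Finset.Icc (m - r) (m - 1) with hU
  set T : Finset ℕ := if d % 2 = 0 then U else insert (m / 2) U with hT
  have hmemU : ∀ i, i ∈ U ↔ (1 ≤ i ∧ i ≤ r) ∨ (m - r ≤ i ∧ i ≤ m - 1) := by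
    intro i; simp [hU, Finset.mem_union, Finset.mem_Icc]
  have hmemT : ∀ i, i ∈ T ↔ (d % 2 = 1 ∧ i = m / 2) ∨ (1 ≤ i ∧ i ≤ r) ∨ (m - r ≤ i ∧ i ≤ m - 1) := by
    intro i
    rcases hdm with h | ⟨h, _⟩ <;> simp [hT, h, hmemU]
  have hTlt : ∀ i ∈ T, 1 ≤ i ∧ i < m := by
    intro i hi; rw [hmemT] at hi; omega
  have hTsym : ∀ i ∈ T, m - i ∈ T := by
    intro i hi
    rw [hmemT] at hi ⊢
    rcases hdm with h | ⟨h, hm⟩ <;> omega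
  have hcardT : T.card = d := by
    have hdisj : Disjoint (Finset.Icc 1 r) (Finset.Icc (m - r) (m - 1)) := by
      rw [Finset.disjoint_left]
      intro a ha hb
      simp only [Finset.mem_Icc] at ha hb
      omega
    have hU' : U.card = r + r := by
      rw [hU, Finset.card_union_of_disjoint hdisj, Nat.card_Icc, Nat.card_Icc]
      omega
    rcases hdm with h | ⟨h, hm⟩
    · rw [hT, if_pos h, hU']; omega
    · rw [hT, if_neg (by omega)]
      rw [Finset.card_insert_of_notMem (by rw [hmemU]; omega), hU']
      omega
  set s : Finset (ZMod m) := T.image (fun i : ℕ => (i : ZMod m)) with hs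
  have hval : ∀ i ∈ T, ((i : ℕ) : ZMod m).val = i := fun i hi =>
    ZMod.val_cast_of_lt (hTlt i hi).2
  have hcards : s.card = d := by
    rw [hs, Finset.card_image_of_injOn, hcardT]
    intro a ha b hb hab
    have := congrArg ZMod.val hab
    rwa [hval a ha, hval b hb] at this
  have h0 : (0 : ZMod m) ∉ s := by
    rw [hs]
    simp only [Finset.mem_image, not_exists]
    rintro i ⟨hi, h⟩
    have := congrArg ZMod.val h
    rw [hval i hi, ZMod.val_zero] at this
    exact absurd this (by have := hTlt i hi; omega)
  have hsym : ∀ a ∈ s, -a ∈ s := by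
    rw [hs]
    simp only [Finset.mem_image]
    rintro a ⟨i, hi, rfl⟩
    refine ⟨m - i, hTsym i hi, ?_⟩
    rw [Nat.cast_sub (le_of_lt (hTlt i hi).2), ZMod.natCast_self, zero_sub]
  -- the circulant graph
  refine ⟨circulantGraph (↑s : Set (ZMod m)), inferInstance, ?_⟩
  have key : ∀ v w : ZMod m, (circulantGraph (↑s : Set (ZMod m))).Adj v w ↔ w - v ∈ s := by
    intro v w
    rw [circulantGraph_adj]
    constructor
    · rintro ⟨hne, h | h⟩
      · have := hsym _ (by simpa using h)
        simpa [neg_sub] using this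
      · simpa using h
    · intro h
      refine ⟨fun hvw => h0 ?_, Or.inr (by simpa using h)⟩
      rw [hvw] at h; simpa using h
  intro v
  have hnb : (circulantGraph (↑s : Set (ZMod m))).neighborFinset v = s.image (fun a => v + a) := by
    ext w
    rw [mem_neighborFinset, key]
    constructor
    · intro h
      exact Finset.mem_image.2 ⟨w - v, h, by ring⟩
    · intro h
      obtain ⟨a, ha, rfl⟩ := Finset.mem_image.1 h
      simpa using ha
  rw [hnb, Finset.card_image_of_injective _ (add_right_injective v), hcards]


lemma join_degrees (k m d L : ℕ) [NeZero m] (H : SimpleGraph (ZMod m)) [DecidableRel H.Adj]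
    (hreg : ∀ v, (H.neighborFinset v).card = d) (hL : L = k + m) :
    ∃ (G : SimpleGraph (Fin L)) (_ : DecidableRel G.Adj),
      ∀ i : Fin L, G.degree i = if i.val < k then L - 1 else k + d := by
  have hm0 : 0 < m := Nat.pos_of_ne_zero (NeZero.ne m)
  let G : SimpleGraph (Fin L) :=
    { Adj := fun i j => i ≠ j ∧ (i.val < k ∨ j.val < k ∨
        H.Adj ((i.val - k : ℕ) : ZMod m) ((j.val - k : ℕ) : ZMod m))
      symm := by
        constructor
        rintro i j ⟨hne, h⟩
        refine ⟨hne.symm, ?_⟩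
        rcases h with h | h | h
        · exact Or.inr (Or.inl h)
        · exact Or.inl h
        · exact Or.inr (Or.inr h.symm)
      loopless := ⟨fun i h => h.1 rfl⟩ }
  have hadj : ∀ i j, G.Adj i j ↔ i ≠ j ∧ (i.val < k ∨ j.val < k ∨
      H.Adj ((i.val - k : ℕ) : ZMod m) ((j.val - k : ℕ) : ZMod m)) := fun i j => Iff.rfl
  haveI dec : DecidableRel G.Adj := fun i j =>
    decidable_of_iff (i ≠ j ∧ (i.val < k ∨ j.val < k ∨
      H.Adj ((i.val - k : ℕ) : ZMod m) ((j.val - k : ℕ) : ZMod m))) (hadj i j).symm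
  refine ⟨G, dec, ?_⟩
  intro i
  by_cases hik : i.val < k
  · rw [if_pos hik]
    have hnb : G.neighborFinset i = Finset.univ.erase i := by
      ext j
      rw [mem_neighborFinset, hadj, Finset.mem_erase]
      constructor
      · rintro ⟨hne, -⟩
        exact ⟨hne.symm, Finset.mem_univ j⟩
      · rintro ⟨hne, -⟩
        exact ⟨hne.symm, Or.inl hik⟩
    rw [SimpleGraph.degree, hnb, Finset.card_erase_of_mem (Finset.mem_univ i),
      Finset.card_univ, Fintype.card_fin]
  · rw [if_neg hik]
    have hik' : k ≤ i.val := le_of_not_gt hik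
    set c : ZMod m := ((i.val - k : ℕ) : ZMod m) with hc
    have hsplit : G.neighborFinset i =
        Finset.univ.filter (fun j : Fin L => j.val < k) ∪
        Finset.univ.filter (fun j : Fin L => ¬ j.val < k ∧ H.Adj c ((j.val - k : ℕ) : ZMod m)) := by
      ext j
      rw [mem_neighborFinset, hadj, Finset.mem_union, Finset.mem_filter, Finset.mem_filter]
      constructor
      · rintro ⟨hne, h | h | h⟩
        · exact absurd h hik
        · exact Or.inl ⟨Finset.mem_univ j, h⟩
        · by_cases hjk : j.val < k
          · exact Or.inl ⟨Finset.mem_univ j, hjk⟩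
          · exact Or.inr ⟨Finset.mem_univ j, hjk, h⟩
      · rintro (⟨-, hj⟩ | ⟨-, hj, hH⟩)
        · exact ⟨fun e => hik (by rw [e]; exact hj), Or.inr (Or.inl hj)⟩
        · refine ⟨fun e => H.loopless.irrefl c ?_, Or.inr (Or.inr hH)⟩
          rw [← e] at hH; exact hH
    have hdisj : Disjoint (Finset.univ.filter (fun j : Fin L => j.val < k))
        (Finset.univ.filter (fun j : Fin L => ¬ j.val < k ∧ H.Adj c ((j.val - k : ℕ) : ZMod m))) := by
      rw [Finset.disjoint_left]
      intro a ha hb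
      rw [Finset.mem_filter] at ha hb
      exact hb.2.1 ha.2
    have h1 : (Finset.univ.filter (fun j : Fin L => j.val < k)).card = k := by
      have : Finset.univ.filter (fun j : Fin L => j.val < k) =
          Finset.univ.image (fun a : Fin k => (⟨a.val, by omega⟩ : Fin L)) := by
        ext j
        rw [Finset.mem_filter, Finset.mem_image]
        constructor
        · rintro ⟨-, hj⟩
          exact ⟨⟨j.val, hj⟩, Finset.mem_univ _, by ext; rfl⟩
        · rintro ⟨a, -, rfl⟩
          exact ⟨Finset.mem_univ _, a.isLt⟩
      rw [this, Finset.card_image_of_injective _ (fun a b hab => by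
        injection hab with h'
        exact Fin.ext h'), Finset.card_univ, Fintype.card_fin]
    have h2 : (Finset.univ.filter (fun j : Fin L => ¬ j.val < k ∧
        H.Adj c ((j.val - k : ℕ) : ZMod m))).card = d := by
      have heq : Finset.univ.filter (fun j : Fin L => ¬ j.val < k ∧
          H.Adj c ((j.val - k : ℕ) : ZMod m)) =
          (H.neighborFinset c).image (fun a : ZMod m =>
            (⟨k + a.val, by have := a.val_lt; omega⟩ : Fin L)) := by
        ext j
        rw [Finset.mem_filter, Finset.mem_image]
        constructor
        · rintro ⟨-, hj, hH⟩
          refine ⟨((j.val - k : ℕ) : ZMod m), (mem_neighborFinset _ _ _).2 hH, ?_⟩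
          have hlt : j.val - k < m := by have := j.isLt; omega
          ext
          simp only [ZMod.val_cast_of_lt hlt]
          omega
        · rintro ⟨a, ha, rfl⟩
          refine ⟨Finset.mem_univ _, by simp, ?_⟩
          simp only [Nat.add_sub_cancel_left]
          rw [ZMod.natCast_rightInverse a]
          exact (mem_neighborFinset _ _ _).1 ha
      rw [heq, Finset.card_image_of_injective _ (fun a b hab => by
        injection hab with h'
        exact ZMod.val_injective _ (by omega)), hreg c]
    rw [SimpleGraph.degree, hsplit, Finset.card_union_of_disjoint hdisj, h1, h2]

/-- A finite list of naturals is graphic if it is realized as the degree sequence of a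
simple graph. -/
def IsGraphicList (l : List ℕ) : Prop :=
  ∃ (G : SimpleGraph (Fin l.length)) (_ : DecidableRel G.Adj), ∀ i, G.degree i = l.get i

/-- For `k ≥ 2`, `n` even with `n ≥ 3k+1`, and `2k ≤ x ≤ n-k-1` with `(n-2k)(x-2k)`
even, the sequence with `k` copies of `n-k-1` followed by `n-2k` copies of `x-k`
(length `n-k`) is graphic. -/
theorem seq_ks_minus_graphic {n k x : ℕ} (hk : 2 ≤ k) (hn : Even n) (hnk : 3 * k + 1 ≤ n)
    (hx1 : 2 * k ≤ x) (hx2 : x ≤ n - k - 1)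
    (hpar : Even ((n - 2 * k) * (x - 2 * k))) :
    IsGraphicList
      (List.replicate k (n - k - 1) ++ List.replicate (n - 2 * k) (x - k)) := by
  classical
  set m := n - 2 * k with hm
  set d := x - 2 * k with hd
  haveI : NeZero m := ⟨by omega⟩
  have hdm : d < m := by omega
  obtain ⟨H, hdec, hreg⟩ := exists_regular_graph m d hdm hpar
  have hL : (List.replicate k (n - k - 1) ++ List.replicate m (x - k)).length = k + m := by
    simp
  obtain ⟨G, dec, hdeg⟩ := @join_degrees k m d _ _ H hdec hreg hL
  refine ⟨G, dec, ?_⟩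
  intro i
  rw [hdeg i]
  by_cases hik : i.val < k
  · rw [if_pos hik]
    have hget : (List.replicate k (n - k - 1) ++ List.replicate m (x - k)).get i = n - k - 1 := by
      rw [List.get_eq_getElem, List.getElem_append_left (by simpa using hik)]
      simp
    rw [hget, hL]
    omega
  · rw [if_neg hik]
    have hget : (List.replicate k (n - k - 1) ++ List.replicate m (x - k)).get i = x - k := by
      rw [List.get_eq_getElem, List.getElem_append_right (by simp; omega)]
      simp
    rw [hget]
    omega
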